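/- Let d be a negative-type distance on a finite set X, let A, B ⊆ X with |A| = |B| = k ≥ 1 and d(B) ≥ d(A), and let π : A → B be a bijection fixing A ∩ B. Then ∑_{a∈A} (d(A − a + π(a)) − d(A)) ≥ (1 − 4/k)·d(B) − d(A). -/

import Mathlib

open Finset

/-- `d` is a distance of negative type on the finite type `X`. -/
def NegType {X : Type*} [Fintype X] (d : X → X → ℝ) : Prop :=
  ∀ x : X → ℝ, ∑ i, x i = 0 → ∑ i, ∑ j, x i * d i j * x j ≤ 0

/-- The dispersion of a finite set: sum of distances over unordered pairs. -/
noncomputable def disp {X : Type*} (d : X → X → ℝ) (A : Finset X) : ℝ :=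
  (∑ a ∈ A, ∑ b ∈ A, d a b) / 2

/-- Sum of all distances between two sets. -/
def dsum {X : Type*} (d : X → X → ℝ) (A B : Finset X) : ℝ :=
  ∑ a ∈ A, ∑ b ∈ B, d a b

section AuxD

set_option linter.unusedSectionVars false

variable {X : Type*} [DecidableEq X] (d : X → X → ℝ)

lemma dsum_nonneg' (h : ∀ a b, 0 ≤ d a b) (S T : Finset X) : 0 ≤ dsum d S T :=
  Finset.sum_nonneg fun a _ => Finset.sum_nonneg fun b _ => h a b

lemma dsum_comm' (hsymm : ∀ a b, d a b = d b a) (S T : Finset X) :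
    dsum d S T = dsum d T S := by
  unfold dsum
  rw [Finset.sum_comm]
  exact Finset.sum_congr rfl fun a _ => Finset.sum_congr rfl fun b _ => hsymm _ _

lemma dsum_union_left' {S T : Finset X} (h : Disjoint S T) (U : Finset X) :
    dsum d (S ∪ T) U = dsum d S U + dsum d T U := Finset.sum_union h

lemma dsum_union_right' {S T : Finset X} (h : Disjoint S T) (U : Finset X) :
    dsum d U (S ∪ T) = dsum d U S + dsum d U T := by
  unfold dsum
  rw [← Finset.sum_add_distrib]
  exact Finset.sum_congr rfl fun a _ => Finset.sum_union h

lemma dsum_singleton' (a : X) (T : Finset X) : dsum d {a} T = ∑ b ∈ T, d a b := by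
  simp [dsum]

lemma sum_dsum_singleton' (S T : Finset X) : ∑ a ∈ S, dsum d {a} T = dsum d S T := by
  simp [dsum]

end AuxD

section AuxNT

set_option linter.unusedSectionVars false

variable {X : Type*} [Fintype X] [DecidableEq X] (d : X → X → ℝ)

lemma combo (hneg : NegType d) {n : ℕ} (c : Fin n → ℝ) (S : Fin n → Finset X)
    (h0 : ∑ i, c i * ((S i).card : ℝ) = 0) :
    ∑ i, ∑ j, c i * c j * dsum d (S i) (S j) ≤ 0 := by
  classical
  set x : X → ℝ := fun v => ∑ i, c i * (if v ∈ S i then (1:ℝ) else 0) with hxdef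
  have hx0 : ∑ v, x v = 0 := by
    simp only [hxdef]
    rw [Finset.sum_comm]
    have e : ∀ i, (∑ v, c i * (if v ∈ S i then (1:ℝ) else 0)) = c i * ((S i).card : ℝ) := by
      intro i
      rw [← Finset.mul_sum]
      congr 1
      simp [Finset.sum_ite_mem]
    simp only [e]
    exact h0
  have key := hneg x hx0
  have inner : ∀ (ci cj : ℝ) (Si Sj : Finset X),
      (∑ v, ∑ u, (ci * (if v ∈ Si then (1:ℝ) else 0)) * d v u *
        (cj * (if u ∈ Sj then (1:ℝ) else 0))) = ci * cj * dsum d Si Sj := by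
    intro ci cj Si Sj
    have : ∀ v u, (ci * (if v ∈ Si then (1:ℝ) else 0)) * d v u *
        (cj * (if u ∈ Sj then (1:ℝ) else 0))
        = ci * cj * (if v ∈ Si then (if u ∈ Sj then d v u else 0) else 0) := by
      intro v u; split_ifs <;> ring
    simp only [this, ← Finset.mul_sum]
    congr 1
    simp [Finset.sum_ite_mem, dsum]
  have H : (∑ v, ∑ u, x v * d v u * x u)
      = ∑ i, ∑ j, c i * c j * dsum d (S i) (S j) := by
    have e1 : ∀ v u : X, x v * d v u * x u
        = ∑ i, ∑ j, (c i * (if v ∈ S i then (1:ℝ) else 0)) * d v u *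
            (c j * (if u ∈ S j then (1:ℝ) else 0)) := by
      intro v u
      simp only [hxdef]
      rw [Finset.sum_mul, Finset.sum_mul_sum]
    simp only [e1]
    calc ∑ v : X, ∑ u : X, ∑ i, ∑ j, (c i * (if v ∈ S i then (1:ℝ) else 0)) * d v u *
            (c j * (if u ∈ S j then (1:ℝ) else 0))
        = ∑ v : X, ∑ i, ∑ u : X, ∑ j, (c i * (if v ∈ S i then (1:ℝ) else 0)) * d v u *
            (c j * (if u ∈ S j then (1:ℝ) else 0)) :=
          Finset.sum_congr rfl fun v _ => Finset.sum_comm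
      _ = ∑ i, ∑ v : X, ∑ u : X, ∑ j, (c i * (if v ∈ S i then (1:ℝ) else 0)) * d v u *
            (c j * (if u ∈ S j then (1:ℝ) else 0)) := Finset.sum_comm
      _ = ∑ i, ∑ v : X, ∑ j, ∑ u : X, (c i * (if v ∈ S i then (1:ℝ) else 0)) * d v u *
            (c j * (if u ∈ S j then (1:ℝ) else 0)) :=
          Finset.sum_congr rfl fun i _ => Finset.sum_congr rfl fun v _ => Finset.sum_comm
      _ = ∑ i, ∑ j, ∑ v : X, ∑ u : X, (c i * (if v ∈ S i then (1:ℝ) else 0)) * d v u *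
            (c j * (if u ∈ S j then (1:ℝ) else 0)) :=
          Finset.sum_congr rfl fun i _ => Finset.sum_comm
      _ = ∑ i, ∑ j, c i * c j * dsum d (S i) (S j) :=
          Finset.sum_congr rfl fun i _ => Finset.sum_congr rfl fun j _ =>
            inner (c i) (c j) (S i) (S j)
  calc ∑ i, ∑ j, c i * c j * dsum d (S i) (S j) = ∑ v, ∑ u, x v * d v u * x u := H.symm
    _ ≤ 0 := key

end AuxNT

section AuxD2

set_option linter.unusedSectionVars false

variable {X : Type*} [DecidableEq X] (d : X → X → ℝ)

lemma disp_insert_erase (hsymm : ∀ a b, d a b = d b a) (hdiag : ∀ a, d a a = 0)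
    {A : Finset X} {a b : X} (ha : a ∈ A) (hb : b ∉ A) :
    disp d (insert b (A.erase a)) = disp d A - dsum d {a} A + dsum d {b} A - d a b := by
  have hbE : b ∉ A.erase a := fun h => hb (Finset.mem_of_mem_erase h)
  have hdisp : ∀ T : Finset X, disp d T = dsum d T T / 2 := fun T => rfl
  have hrow : ∀ x : X, ∑ y ∈ A.erase a, d x y = (∑ y ∈ A, d x y) - d x a :=
    fun x => Finset.sum_erase_eq_sub ha
  have hEE : dsum d (A.erase a) (A.erase a)
      = dsum d A A - 2 * ∑ y ∈ A, d a y := by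
    unfold dsum
    calc ∑ x ∈ A.erase a, ∑ y ∈ A.erase a, d x y
        = ∑ x ∈ A.erase a, ((∑ y ∈ A, d x y) - d x a) :=
          Finset.sum_congr rfl fun x _ => hrow x
      _ = (∑ x ∈ A.erase a, ∑ y ∈ A, d x y) - ∑ x ∈ A.erase a, d x a :=
          Finset.sum_sub_distrib _ _
      _ = ((∑ x ∈ A, ∑ y ∈ A, d x y) - ∑ y ∈ A, d a y)
          - ((∑ x ∈ A, d x a) - d a a) := by
          rw [Finset.sum_erase_eq_sub ha, Finset.sum_erase_eq_sub ha]
      _ = (∑ x ∈ A, ∑ y ∈ A, d x y) - 2 * ∑ y ∈ A, d a y := by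
          rw [hdiag]
          have : ∑ x ∈ A, d x a = ∑ y ∈ A, d a y :=
            Finset.sum_congr rfl fun x _ => hsymm x a
          rw [this]; ring
  have hII : dsum d (insert b (A.erase a)) (insert b (A.erase a))
      = dsum d (A.erase a) (A.erase a) + 2 * ∑ y ∈ A.erase a, d b y := by
    unfold dsum
    rw [Finset.sum_insert hbE]
    have h1 : ∑ y ∈ insert b (A.erase a), d b y = ∑ y ∈ A.erase a, d b y := by
      rw [Finset.sum_insert hbE, hdiag, zero_add]
    have h2 : ∀ x ∈ A.erase a, ∑ y ∈ insert b (A.erase a), d x y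
        = d x b + ∑ y ∈ A.erase a, d x y := fun x _ => Finset.sum_insert hbE
    rw [h1, Finset.sum_congr rfl h2, Finset.sum_add_distrib]
    have h3 : ∑ x ∈ A.erase a, d x b = ∑ x ∈ A.erase a, d b x :=
      Finset.sum_congr rfl fun x _ => hsymm x b
    rw [h3]; ring
  rw [hdisp, hdisp, hII, hEE, hrow b, dsum_singleton', dsum_singleton']
  have : d b a = d a b := hsymm b a
  rw [this]; ring

end AuxD2

set_option maxHeartbeats 2000000 in
theorem stmt_4 {X : Type*} [Fintype X] [DecidableEq X] (d : X → X → ℝ)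
    (hsymm : ∀ a b, d a b = d b a) (hnonneg : ∀ a b, 0 ≤ d a b)
    (hdiag : ∀ a, d a a = 0) (hneg : NegType d)
    (k : ℕ) (hk : 1 ≤ k) (A B : Finset X) (hAcard : A.card = k) (hBcard : B.card = k)
    (hdBA : disp d B ≥ disp d A)
    (π : X → X) (hbij : Set.BijOn π ↑A ↑B)
    (hfix : ∀ a ∈ A, a ∈ B → π a = a) :
    ∑ a ∈ A, (disp d (insert (π a) (A.erase a)) - disp d A)
      ≥ (1 - 4 / k) * disp d B - disp d A := by
  classical
  have hdisp : ∀ T : Finset X, disp d T = dsum d T T / 2 := fun T => by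
    simp [disp, dsum]
  set K : ℝ := (k : ℝ) with hKdef
  have hK1 : (1:ℝ) ≤ K := by rw [hKdef]; exact_mod_cast hk
  have hKpos : (0:ℝ) < K := by linarith
  set C : Finset X := A ∩ B with hCdef
  set A' : Finset X := A \ B with hA'def
  set B' : Finset X := B \ A with hB'def
  -- basic membership facts
  have hπAB : ∀ a ∈ A, π a ∈ B := fun a ha => hbij.mapsTo ha
  have hinjA : ∀ a ∈ A, ∀ b ∈ A, π a = π b → a = b := fun a ha b hb h =>
    hbij.injOn ha hb h
  have hmaps : ∀ a ∈ A', π a ∈ B' := by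
    intro a ha'
    obtain ⟨haA, haB⟩ := Finset.mem_sdiff.mp ha'
    have hπB : π a ∈ B := hπAB a haA
    refine Finset.mem_sdiff.mpr ⟨hπB, fun hπA => ?_⟩
    have hfixπ : π (π a) = π a := hfix _ hπA hπB
    have heq : π a = a := hinjA _ hπA _ haA hfixπ
    exact haB (heq ▸ hπB)
  have hsurj : ∀ b ∈ B', ∃ a, ∃ _ : a ∈ A', π a = b := by
    intro b hb'
    obtain ⟨hbB, hbA⟩ := Finset.mem_sdiff.mp hb'
    obtain ⟨a, haA, hab⟩ := hbij.surjOn hbB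
    have haA' : a ∈ A := haA
    refine ⟨a, Finset.mem_sdiff.mpr ⟨haA', fun haB => ?_⟩, hab⟩
    have : π a = a := hfix a haA' haB
    rw [this] at hab
    exact hbA (hab ▸ haA')
  have hinj' : ∀ a₁, ∀ _ : a₁ ∈ A', ∀ a₂, ∀ _ : a₂ ∈ A', π a₁ = π a₂ → a₁ = a₂ := by
    intro a₁ h₁ a₂ h₂ h
    exact hinjA _ (Finset.mem_sdiff.mp h₁).1 _ (Finset.mem_sdiff.mp h₂).1 h
  have hcardeq : A'.card = B'.card :=
    Finset.card_bij (fun a _ => π a) hmaps hinj' hsurj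
  have hsumpi : ∀ f : X → ℝ, ∑ a ∈ A', f (π a) = ∑ b ∈ B', f b := fun f =>
    Finset.sum_bij (fun a _ => π a) hmaps hinj' hsurj (fun a ha => rfl)
  -- the sum over A rewritten
  set Sm : ℝ := ∑ a ∈ A', d a (π a) with hSmdef
  have hSm0 : 0 ≤ Sm := Finset.sum_nonneg fun a _ => hnonneg _ _
  have hsplit : ∑ a ∈ A, (disp d (insert (π a) (A.erase a)) - disp d A)
      = dsum d B' A - dsum d A' A - Sm := by
    rw [← Finset.sum_inter_add_sum_sdiff A B
      (fun a => disp d (insert (π a) (A.erase a)) - disp d A)]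
    have hzero : ∑ a ∈ A ∩ B, (disp d (insert (π a) (A.erase a)) - disp d A) = 0 := by
      apply Finset.sum_eq_zero
      intro a haC
      obtain ⟨haA, haB⟩ := Finset.mem_inter.mp haC
      rw [hfix a haA haB, Finset.insert_erase haA, sub_self]
    have hrest : ∑ a ∈ A \ B, (disp d (insert (π a) (A.erase a)) - disp d A)
        = dsum d B' A - dsum d A' A - Sm := by
      have hterm : ∀ a ∈ A', disp d (insert (π a) (A.erase a)) - disp d A
          = dsum d {π a} A - dsum d {a} A - d a (π a) := by
        intro a ha'
        obtain ⟨haA, _⟩ := Finset.mem_sdiff.mp ha'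
        have hπ : π a ∉ A := (Finset.mem_sdiff.mp (hmaps a ha')).2
        rw [disp_insert_erase d hsymm hdiag haA hπ]
        ring
      calc ∑ a ∈ A \ B, (disp d (insert (π a) (A.erase a)) - disp d A)
          = ∑ a ∈ A', (dsum d {π a} A - dsum d {a} A - d a (π a)) :=
            Finset.sum_congr rfl hterm
        _ = (∑ a ∈ A', dsum d {π a} A) - (∑ a ∈ A', dsum d {a} A)
            - ∑ a ∈ A', d a (π a) := by
            rw [Finset.sum_sub_distrib, Finset.sum_sub_distrib]
        _ = dsum d B' A - dsum d A' A - Sm := by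
            rw [hsumpi (fun b => dsum d {b} A), sum_dsum_singleton', sum_dsum_singleton']
    rw [hzero, hrest, zero_add]
  -- decomposition facts
  have hdisjA : Disjoint A' C := Finset.disjoint_sdiff_inter A B
  have hdisjB : Disjoint B' C := by
    rw [hCdef, Finset.inter_comm]
    exact Finset.disjoint_sdiff_inter B A
  have hAdec : A' ∪ C = A := Finset.sdiff_union_inter A B
  have hBdec : B' ∪ C = B := by
    rw [hCdef, Finset.inter_comm]
    exact Finset.sdiff_union_inter B A
  set scc : ℝ := dsum d C C with hsccdef
  set sca : ℝ := dsum d C A' with hscadef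
  set scb : ℝ := dsum d C B' with hscbdef
  set saa : ℝ := dsum d A' A' with hsaadef
  set sbb : ℝ := dsum d B' B' with hsbbdef
  set x0 : ℝ := dsum d A' B' with hx0def
  have hAA : dsum d A A = scc + 2*sca + saa := by
    rw [← hAdec, dsum_union_left' d hdisjA, dsum_union_right' d hdisjA,
      dsum_union_right' d hdisjA, hscadef, dsum_comm' d hsymm A' C]
    ring
  have hBB : dsum d B B = scc + 2*scb + sbb := by
    rw [← hBdec, dsum_union_left' d hdisjB, dsum_union_right' d hdisjB,
      dsum_union_right' d hdisjB, hscbdef, dsum_comm' d hsymm B' C]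
    ring
  have hB'A : dsum d B' A = scb + x0 := by
    rw [← hAdec, dsum_union_right' d hdisjA, hscbdef, dsum_comm' d hsymm B' C,
      hx0def, dsum_comm' d hsymm B' A']
    ring
  have hA'A : dsum d A' A = sca + saa := by
    rw [← hAdec, dsum_union_right' d hdisjA, hscadef, dsum_comm' d hsymm A' C]
    ring
  have hAA' : dsum d A A' = sca + saa := by
    rw [dsum_comm' d hsymm A A', hA'A]
  have hBB' : dsum d B B' = scb + sbb := by
    rw [dsum_comm' d hsymm B B', ← hBdec, dsum_union_right' d hdisjB, hscbdef,
      dsum_comm' d hsymm B' C]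
    ring
  have hCA : dsum d C A = scc + sca := by
    rw [← hAdec, dsum_union_right' d hdisjA]
    ring
  have hCB : dsum d C B = scc + scb := by
    rw [← hBdec, dsum_union_right' d hdisjB]
    ring
  -- nonnegativity
  have hscc0 : 0 ≤ scc := dsum_nonneg' d hnonneg _ _
  have hsca0 : 0 ≤ sca := dsum_nonneg' d hnonneg _ _
  have hscb0 : 0 ≤ scb := dsum_nonneg' d hnonneg _ _
  have hsaa0 : 0 ≤ saa := dsum_nonneg' d hnonneg _ _
  have hsbb0 : 0 ≤ sbb := dsum_nonneg' d hnonneg _ _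
  have hx00 : 0 ≤ x0 := dsum_nonneg' d hnonneg _ _
  -- case split on A' = ∅
  by_cases hA'emp : A' = ∅
  · have hAB : A = B := by
      apply Finset.eq_of_subset_of_card_le
      · intro a ha
        by_contra haB
        have : a ∈ A' := Finset.mem_sdiff.mpr ⟨ha, haB⟩
        simp [hA'emp] at this
      · rw [hAcard, hBcard]
    have hLHS : ∑ a ∈ A, (disp d (insert (π a) (A.erase a)) - disp d A) = 0 := by
      apply Finset.sum_eq_zero
      intro a ha
      have haB : a ∈ B := hAB ▸ ha
      rw [hfix a ha haB, Finset.insert_erase ha, sub_self]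
    rw [hLHS, hAB]
    have hdB0 : 0 ≤ disp d B := by
      rw [hdisp]
      have := dsum_nonneg' d hnonneg B B
      linarith
    have h4K : 0 < 4 / K := by positivity
    have hprod : 0 ≤ 4 / K * disp d B := mul_nonneg (le_of_lt h4K) hdB0
    nlinarith only [hprod, hdB0]
  -- main case : A' nonempty
  have hmpos : 0 < A'.card := Finset.card_pos.mpr (Finset.nonempty_iff_ne_empty.mpr hA'emp)
  set M : ℝ := (A'.card : ℝ) with hMdef
  have hM1 : (1:ℝ) ≤ M := by
    have h1 : 1 ≤ A'.card := hmpos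
    rw [hMdef]; exact_mod_cast h1
  have hM0 : (0:ℝ) < M := by linarith
  have hB'M : ((B'.card : ℕ) : ℝ) = M := by
    rw [hMdef, hcardeq]
  have hMK : M ≤ K := by
    have : A'.card ≤ A.card := Finset.card_le_card (Finset.sdiff_subset)
    rw [hAcard] at this
    rw [hMdef, hKdef]; exact_mod_cast this
  have hCcard : (C.card : ℝ) = K - M := by
    have h0 := Finset.card_sdiff_add_card_inter A B
    rw [hAcard] at h0
    have h2 : M + (C.card : ℝ) = K := by
      rw [hMdef, hCdef, hA'def, hKdef]; exact_mod_cast h0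
    linarith
  -- (I2) : saa + sbb ≤ 2 x0
  have hI2 : saa + sbb ≤ 2 * x0 := by
    have h := combo d hneg ![1, -1] ![A', B'] (by
      simp [Fin.sum_univ_two, hcardeq])
    simp only [Fin.sum_univ_two, Matrix.cons_val_zero, Matrix.cons_val_one,
      Matrix.head_cons] at h
    rw [dsum_comm' d hsymm B' A'] at h
    rw [← hsaadef, ← hsbbdef, ← hx0def] at h
    linarith only [h]
  -- (I3) : K * saa ≤ M * (scc + 2 sca + saa)
  have hstepA : ∀ c0 ∈ C, dsum d A A ≤ 2*K*dsum d {c0} A := by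
    intro c0 _
    have h := combo d hneg ![K, -1] ![{c0}, A] (by
      simp [Fin.sum_univ_two, hAcard, hKdef])
    simp only [Fin.sum_univ_two, Matrix.cons_val_zero, Matrix.cons_val_one,
      Matrix.head_cons] at h
    have hcc : dsum d {c0} {c0} = 0 := by simp [dsum, hdiag]
    rw [hcc, dsum_comm' d hsymm A {c0}] at h
    linarith only [h]
  have hsumA : (K - M) * dsum d A A ≤ 2*K*dsum d C A := by
    have h := Finset.sum_le_sum hstepA
    rw [Finset.sum_const, ← Finset.mul_sum, sum_dsum_singleton'] at h
    rw [nsmul_eq_mul, hCcard] at h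
    exact h
  have hstep2A : M*M*dsum d A A + K*K*saa ≤ 2*(K*M)*dsum d A A' := by
    have h := combo d hneg ![M, -K] ![A, A'] (by
      simp only [Fin.sum_univ_two, Matrix.cons_val_zero, Matrix.cons_val_one,
        Matrix.head_cons, hAcard]
      rw [hMdef]
      ring)
    simp only [Fin.sum_univ_two, Matrix.cons_val_zero, Matrix.cons_val_one,
      Matrix.head_cons] at h
    rw [dsum_comm' d hsymm A' A, ← hsaadef] at h
    linarith only [h]
  have hI3 : K * saa ≤ M * (scc + 2*sca + saa) := by
    have hKK : K*(K*saa) ≤ K*(M*(scc + 2*sca + saa)) := by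
      rw [hAA, hAA'] at hstep2A
      rw [hAA, hCA] at hsumA
      have hMul := mul_le_mul_of_nonneg_left hsumA (le_of_lt hM0)
      linarith only [hstep2A, hMul]
    exact le_of_mul_le_mul_left hKK hKpos
  -- (I4) : K * sbb ≤ M * (scc + 2 scb + sbb)
  have hstepB : ∀ c0 ∈ C, dsum d B B ≤ 2*K*dsum d {c0} B := by
    intro c0 _
    have h := combo d hneg ![K, -1] ![{c0}, B] (by
      simp [Fin.sum_univ_two, hBcard, hKdef])
    simp only [Fin.sum_univ_two, Matrix.cons_val_zero, Matrix.cons_val_one,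
      Matrix.head_cons] at h
    have hcc : dsum d {c0} {c0} = 0 := by simp [dsum, hdiag]
    rw [hcc, dsum_comm' d hsymm B {c0}] at h
    linarith only [h]
  have hsumB : (K - M) * dsum d B B ≤ 2*K*dsum d C B := by
    have h := Finset.sum_le_sum hstepB
    rw [Finset.sum_const, ← Finset.mul_sum, sum_dsum_singleton'] at h
    rw [nsmul_eq_mul, hCcard] at h
    exact h
  have hstep2B : M*M*dsum d B B + K*K*sbb ≤ 2*(K*M)*dsum d B B' := by
    have h := combo d hneg ![M, -K] ![B, B'] (by
      simp only [Fin.sum_univ_two, Matrix.cons_val_zero, Matrix.cons_val_one,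
        Matrix.head_cons, hBcard]
      rw [hB'M]
      ring)
    simp only [Fin.sum_univ_two, Matrix.cons_val_zero, Matrix.cons_val_one,
      Matrix.head_cons] at h
    rw [dsum_comm' d hsymm B' B, ← hsbbdef] at h
    linarith only [h]
  have hI4 : K * sbb ≤ M * (scc + 2*scb + sbb) := by
    have hKK : K*(K*sbb) ≤ K*(M*(scc + 2*scb + sbb)) := by
      rw [hBB, hBB'] at hstep2B
      rw [hBB, hCB] at hsumB
      have hMul := mul_le_mul_of_nonneg_left hsumB (le_of_lt hM0)
      linarith only [hstep2B, hMul]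
    exact le_of_mul_le_mul_left hKK hKpos
  -- (I1) : 2 M Sm ≤ saa + sbb + 2 x0
  have hI1 : 2 * M * Sm ≤ saa + sbb + 2 * x0 := by
    have hper : ∀ a ∈ A', 2*(M*M)*d a (π a)
        ≤ 2*M*(dsum d {a} A' + dsum d {a} B' + dsum d {π a} A' + dsum d {π a} B')
          - (saa + sbb + 2*x0) := by
      intro a ha'
      have h := combo d hneg ![M, M, -1, -1] ![{a}, {π a}, A', B'] (by
        simp only [Fin.sum_univ_four, Matrix.cons_val_zero, Matrix.cons_val_one,
          Matrix.head_cons, Matrix.cons_val_two, Matrix.tail_cons, Matrix.cons_val_three,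
          Matrix.head_fin_const, Finset.card_singleton, Nat.cast_one, hB'M]
        rw [hMdef]
        ring)
      simp only [Fin.sum_univ_four, Matrix.cons_val_zero, Matrix.cons_val_one,
        Matrix.head_cons, Matrix.cons_val_two, Matrix.tail_cons, Matrix.cons_val_three,
        Matrix.head_fin_const] at h
      have haa : dsum d {a} {a} = 0 := by simp [dsum, hdiag]
      have hpp : dsum d {π a} {π a} = 0 := by simp [dsum, hdiag]
      have hap : dsum d {a} {π a} = d a (π a) := by simp [dsum]
      have hpa : dsum d {π a} {a} = d a (π a) := by simp [dsum, hsymm (π a) a]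
      rw [haa, hpp, hap, hpa,
        dsum_comm' d hsymm A' {a}, dsum_comm' d hsymm A' {π a},
        dsum_comm' d hsymm B' {a}, dsum_comm' d hsymm B' {π a},
        dsum_comm' d hsymm B' A', ← hsaadef, ← hsbbdef, ← hx0def] at h
      linarith only [h]
    have hs := Finset.sum_le_sum hper
    rw [← Finset.mul_sum, ← hSmdef] at hs
    have hrhs : ∑ a ∈ A', (2*M*(dsum d {a} A' + dsum d {a} B' + dsum d {π a} A'
        + dsum d {π a} B') - (saa + sbb + 2*x0))
        = 2*M*(saa + x0 + x0 + sbb) - M*(saa + sbb + 2*x0) := by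
      rw [Finset.sum_sub_distrib, Finset.sum_const, ← Finset.mul_sum]
      have e1 : ∑ a ∈ A', (dsum d {a} A' + dsum d {a} B' + dsum d {π a} A'
          + dsum d {π a} B') = saa + x0 + x0 + sbb := by
        rw [Finset.sum_add_distrib, Finset.sum_add_distrib, Finset.sum_add_distrib]
        rw [sum_dsum_singleton', sum_dsum_singleton',
          hsumpi (fun b => dsum d {b} A'), hsumpi (fun b => dsum d {b} B'),
          sum_dsum_singleton', sum_dsum_singleton']
        rw [← hsaadef, ← hsbbdef, ← hx0def, dsum_comm' d hsymm B' A', ← hx0def]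
      rw [e1, nsmul_eq_mul, ← hMdef]
    rw [hrhs] at hs
    have hM2 : M*(2*M*Sm) ≤ M*(saa + sbb + 2*x0) := by linarith only [hs]
    exact le_of_mul_le_mul_left hM2 hM0
  -- (I5)
  have hI5 : scc + 2*sca + saa ≤ scc + 2*scb + sbb := by
    have h1 := hdBA
    rw [hdisp, hdisp, hAA, hBB] at h1
    linarith only [h1]
  -- final assembly
  rw [hsplit, hB'A, hA'A]
  have key2 : 2*K*Sm ≤ K*(2*x0 - saa - sbb) + 4*(scc + 2*scb + sbb) := by
    have key1 : M*(2*K*Sm) ≤ M*(K*(2*x0 - saa - sbb) + 4*(scc + 2*scb + sbb)) := by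
      have ha : K*(2*M*Sm) ≤ K*(saa + sbb + 2*x0) :=
        mul_le_mul_of_nonneg_left hI1 (le_of_lt hKpos)
      have hb : K*(2*x0 - saa - sbb) ≤ M*(K*(2*x0 - saa - sbb)) := by
        have hb0 : 0 ≤ (M - 1) * (K * (2*x0 - saa - sbb)) :=
          mul_nonneg (sub_nonneg.mpr hM1) (mul_nonneg (le_of_lt hKpos)
            (by linarith only [hI2] : (0:ℝ) ≤ 2*x0 - saa - sbb))
        linarith only [hb0]
      have hc : M*(scc + 2*sca + saa) ≤ M*(scc + 2*scb + sbb) :=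
        mul_le_mul_of_nonneg_left hI5 (le_of_lt hM0)
      linarith only [ha, hb, hc, hI3, hI4]
    exact le_of_mul_le_mul_left key1 hM0
  rw [ge_iff_le, hdisp, hdisp, hAA, hBB]
  rw [← mul_le_mul_iff_right₀ (show (0:ℝ) < 2*K by linarith)]
  have hexp : 2*K*((1 - 4/K) * ((scc + 2*scb + sbb)/2) - (scc + 2*sca + saa)/2)
      = K*(scc + 2*scb + sbb) - 4*(scc + 2*scb + sbb) - K*(scc + 2*sca + saa) := by
    field_simp
  rw [hexp]
  linarith only [key2]
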